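/- Let X : ℝⁿ → ℝⁿ be a C¹ vector field, f(x) = ½‖X(x)‖², F(x) = DX(x) − (DX(x))ᵀ, and define the Lagrangian L(x, v) = ½‖v − X(x)‖² = ½‖v‖² − ⟨X(x), v⟩ + f(x). A C² curve x : I → ℝⁿ satisfies the Euler–Lagrange equations of L, namely d/dt (∂L/∂v)(x(t), x′(t)) = (∂L/∂x)(x(t), x′(t)), if and only if x″(t) = ∇f(x(t)) + F(x(t)) (x′(t)) for all t ∈ I. Hence the trajectories of the geometric dynamics x″ = ∇f + F(x′) are exactly the extremals of L. -/

import Mathlib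

open scoped RealInnerProductSpace

section aux

variable {n : ℕ}

local notation "E" => EuclideanSpace ℝ (Fin n)

lemma aux_grad_v (w u : E) :
    HasGradientAt (fun v : E => (1 / 2 : ℝ) * ‖v - w‖ ^ 2) (u - w) u := by
  rw [hasGradientAt_iff_hasFDerivAt]
  have h1 := ((hasFDerivAt_id u).sub_const w).inner ℝ ((hasFDerivAt_id u).sub_const w)
  have h2 := h1.const_mul (1 / 2 : ℝ)
  have hfun : (fun v : E => (1 / 2 : ℝ) * ‖v - w‖ ^ 2)
      = fun v : E => (1 / 2 : ℝ) * ⟪v - w, v - w⟫ := by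
    funext v; rw [real_inner_self_eq_norm_sq]
  rw [hfun]
  refine h2.congr_fderiv (Eq.symm ?_)
  ext h
  simp only [InnerProductSpace.toDual_apply_apply, ContinuousLinearMap.smul_apply,
    ContinuousLinearMap.comp_apply, ContinuousLinearMap.prod_apply, fderivInnerCLM_apply,
    ContinuousLinearMap.id_apply, ContinuousLinearMap.coe_id', id_eq, smul_eq_mul]
  rw [real_inner_comm h (u - w)]
  ring

lemma aux_grad_x (X : E → E) {D : E →L[ℝ] E} {x : E} (hD : HasFDerivAt X D x) (v : E) :
    HasGradientAt (fun y : E => (1 / 2 : ℝ) * ‖v - X y‖ ^ 2)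
      (ContinuousLinearMap.adjoint D (X x - v)) x := by
  rw [hasGradientAt_iff_hasFDerivAt]
  have h1 := ((hasFDerivAt_const v x).sub hD).inner ℝ ((hasFDerivAt_const v x).sub hD)
  have h2 := h1.const_mul (1 / 2 : ℝ)
  have hfun : (fun y : E => (1 / 2 : ℝ) * ‖v - X y‖ ^ 2)
      = fun y : E => (1 / 2 : ℝ) * ⟪v - X y, v - X y⟫ := by
    funext y; rw [real_inner_self_eq_norm_sq]
  rw [hfun]
  refine h2.congr_fderiv (Eq.symm ?_)
  ext h
  simp only [InnerProductSpace.toDual_apply_apply, ContinuousLinearMap.smul_apply,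
    ContinuousLinearMap.comp_apply, ContinuousLinearMap.prod_apply, fderivInnerCLM_apply,
    ContinuousLinearMap.sub_apply, ContinuousLinearMap.zero_apply, zero_sub,
    ContinuousLinearMap.neg_apply, inner_neg_left, inner_neg_right, smul_eq_mul,
    ContinuousLinearMap.adjoint_inner_left, Pi.sub_apply]
  rw [real_inner_comm (D h) (v - X x)]
  simp only [inner_sub_left, inner_sub_right]
  rw [real_inner_comm (D h) v, real_inner_comm (D h) (X x)]
  ring

end aux

/-- For a C¹ vector field `X`, energy `f = ½‖X‖²`, external tensor
`F = DX - (DX)ᵀ`, and the Lagrangian `L(x,v) = ½‖v - X(x)‖²`, a C² curve satisfies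
the Euler–Lagrange equations of `L` iff it satisfies the geometric dynamics
`x'' = ∇f(x) + F(x)(x')`: the trajectories of the geometric dynamics are exactly
the extremals of `L`. -/
theorem geometric_dynamics_iff_euler_lagrange {n : ℕ}
    (X : EuclideanSpace ℝ (Fin n) → EuclideanSpace ℝ (Fin n))
    (hX : ContDiff ℝ 1 X)
    (f : EuclideanSpace ℝ (Fin n) → ℝ)
    (hf : ∀ x, f x = (1 / 2) * ‖X x‖ ^ 2)
    (F : EuclideanSpace ℝ (Fin n) →
      EuclideanSpace ℝ (Fin n) →L[ℝ] EuclideanSpace ℝ (Fin n))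
    (hF : ∀ x, F x = fderiv ℝ X x - ContinuousLinearMap.adjoint (fderiv ℝ X x))
    (L : EuclideanSpace ℝ (Fin n) → EuclideanSpace ℝ (Fin n) → ℝ)
    (hL : ∀ x v, L x v = (1 / 2) * ‖v - X x‖ ^ 2)
    (a b : ℝ) (c c' c'' : ℝ → EuclideanSpace ℝ (Fin n))
    (hc : ∀ t ∈ Set.Ioo a b, HasDerivAt c (c' t) t)
    (hc' : ∀ t ∈ Set.Ioo a b, HasDerivAt c' (c'' t) t) :
    (∀ t ∈ Set.Ioo a b,
        HasDerivAt (fun s => gradient (fun v => L (c s) v) (c' s))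
          (gradient (fun x => L x (c' t)) (c t)) t) ↔
      (∀ t ∈ Set.Ioo a b, c'' t = gradient f (c t) + F (c t) (c' t)) := by
  have hXd : ∀ y, HasFDerivAt X (fderiv ℝ X y) y := fun y =>
    (hX.differentiable one_ne_zero y).hasFDerivAt
  -- gradient of L in v
  have hgv : ∀ x u, gradient (fun v => L x v) u = u - X x := by
    intro x u
    have : (fun v => L x v) = fun v => (1 / 2 : ℝ) * ‖v - X x‖ ^ 2 := by
      funext v; exact hL x v
    rw [this]
    exact (aux_grad_v (X x) u).gradient
  -- gradient of L in x
  have hgx : ∀ x u, gradient (fun y => L y u) x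
      = ContinuousLinearMap.adjoint (fderiv ℝ X x) (X x - u) := by
    intro x u
    have : (fun y => L y u) = fun y => (1 / 2 : ℝ) * ‖u - X y‖ ^ 2 := by
      funext y; exact hL y u
    rw [this]
    exact (aux_grad_x X (hXd x) u).gradient
  -- gradient of f
  have hgf : ∀ x, gradient f x = ContinuousLinearMap.adjoint (fderiv ℝ X x) (X x) := by
    intro x
    have : f = fun y => (1 / 2 : ℝ) * ‖(0 : EuclideanSpace ℝ (Fin n)) - X y‖ ^ 2 := by
      funext y; rw [hf y, zero_sub, norm_neg]
    rw [this]
    have := (aux_grad_x X (hXd x) 0).gradient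
    rwa [sub_zero] at this
  -- rewrite the function whose derivative is taken
  have hfun : (fun s => gradient (fun v => L (c s) v) (c' s))
      = fun s => c' s - X (c s) := by
    funext s; exact hgv (c s) (c' s)
  constructor
  · intro h t ht
    have h1 := h t ht
    rw [hfun, hgx] at h1
    have h2 : HasDerivAt (fun s => c' s - X (c s))
        (c'' t - fderiv ℝ X (c t) (c' t)) t :=
      (hc' t ht).sub ((hXd (c t)).comp_hasDerivAt t (hc t ht))
    have heq := h1.unique h2
    rw [hgf, hF]
    have := heq.symm
    rw [sub_eq_iff_eq_add] at this
    rw [this]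
    simp only [ContinuousLinearMap.sub_apply, map_sub]
    abel
  · intro h t ht
    rw [hfun, hgx]
    have h2 : HasDerivAt (fun s => c' s - X (c s))
        (c'' t - fderiv ℝ X (c t) (c' t)) t :=
      (hc' t ht).sub ((hXd (c t)).comp_hasDerivAt t (hc t ht))
    have heq : c'' t - fderiv ℝ X (c t) (c' t)
        = ContinuousLinearMap.adjoint (fderiv ℝ X (c t)) (X (c t) - c' t) := by
      rw [h t ht, hgf, hF]
      simp only [ContinuousLinearMap.sub_apply, map_sub]
      abel
    rwa [heq] at h2
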